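/- Let N ≥ 1 be an integer, σ ∈ (0,2), and let g : ℝ^N → ℝ be a bounded C² function with bounded first and second derivatives. Then there exists a constant C > 0 such that for every x ∈ ℝ^N and every y ∈ (0,1], the principal value lim_{ε→0⁺} ∫_{{ξ : |ξ−x| > ε}} (g(ξ) − g(x)) (K_y(x,ξ) − K_0(x,ξ)) dξ exists, and its absolute value is at most C · y^{2−σ}. -/

import Mathlib

open MeasureTheory Filter Set Metric Module

section Radial

variable {E : Type*} [NormedAddCommGroup E] [NormedSpace ℝ E] [MeasurableSpace E]
  [BorelSpace E] [FiniteDimensional ℝ E] [Nontrivial E]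

/-- If the 1-D radial profile is integrable against `r ^ (n-1) dr`, then the radial function
is integrable on `E`. -/
lemma radial_integrable (μ : Measure E) [μ.IsAddHaarMeasure] {f : ℝ → ℝ}
    (hf : Measurable f)
    (h : IntegrableOn (fun r : ℝ => r ^ (finrank ℝ E - 1) * f r) (Ioi (0:ℝ)) volume) :
    Integrable (fun x : E => f ‖x‖) μ := by
  set n := finrank ℝ E with hn
  have h1 : Integrable (fun r : Ioi (0:ℝ) => (r : ℝ) ^ (n - 1) * f r)
      (Measure.comap Subtype.val volume) := by
    have e := (MeasurableEmbedding.subtype_coe (measurableSet_Ioi (a := (0:ℝ)))).integrable_map_iff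
      (μ := Measure.comap Subtype.val volume) (g := fun r : ℝ => r ^ (n - 1) * f r)
    rw [(MeasurableEmbedding.subtype_coe measurableSet_Ioi).map_comap, Subtype.range_coe] at e
    exact e.mp h
  have h2 : Integrable (fun r : Ioi (0:ℝ) => f r) (Measure.volumeIoiPow (n - 1)) := by
    rw [Measure.volumeIoiPow, integrable_withDensity_iff (by fun_prop)
      (Eventually.of_forall fun r => ENNReal.ofReal_lt_top)]
    refine h1.congr (Eventually.of_forall fun r => ?_)
    dsimp only
    rw [ENNReal.toReal_ofReal (pow_nonneg (le_of_lt r.2) _), mul_comm]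
  have h3 : Integrable (fun p : sphere (0:E) 1 × Ioi (0:ℝ) => f p.2)
      (μ.toSphere.prod (Measure.volumeIoiPow (n - 1))) := by
    have h2' := h2.smul_measure (c := μ.toSphere univ) (measure_ne_top _ _)
    rw [← Measure.map_snd_prod] at h2'
    exact (integrable_map_measure
      ((hf.comp measurable_subtype_coe).aestronglyMeasurable)
      measurable_snd.aemeasurable).mp h2'
  have h4 := (μ.measurePreserving_homeomorphUnitSphereProd.integrable_comp_emb
      (Homeomorph.measurableEmbedding _)).mpr h3
  have h5 : Integrable (fun x : ({0}ᶜ : Set E) => f ‖(x : E)‖)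
      (Measure.comap Subtype.val μ) := by
    refine h4.congr (Eventually.of_forall fun z => ?_)
    simp [Function.comp]
  have h6 : Integrable (fun x : E => f ‖x‖)
      (μ.restrict (range (Subtype.val : ({0}ᶜ : Set E) → E))) := by
    have e := (MeasurableEmbedding.subtype_coe
      (measurableSet_singleton (0:E)).compl).integrable_map_iff
      (μ := Measure.comap Subtype.val μ) (g := fun x : E => f ‖x‖)
    rw [(MeasurableEmbedding.subtype_coe (measurableSet_singleton (0:E)).compl).map_comap] at e
    exact e.mpr h5
  rwa [Subtype.range_coe, MeasureTheory.restrict_compl_singleton] at h6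

/-- Integrability of a negative power of the norm outside a ball. -/
lemma integrableOn_norm_rpow_gt (μ : Measure E) [μ.IsAddHaarMeasure] {s : ℝ}
    (hs : s < -(finrank ℝ E : ℝ)) {c : ℝ} (hc : 0 < c) :
    IntegrableOn (fun h : E => ‖h‖ ^ s) {h : E | c < ‖h‖} μ := by
  have hn1 : 1 ≤ finrank ℝ E := Module.finrank_pos
  have hms : MeasurableSet {h : E | c < ‖h‖} :=
    measurableSet_lt measurable_const measurable_norm
  rw [← integrable_indicator_iff hms]
  have hrw : ({h : E | c < ‖h‖}.indicator fun h : E => ‖h‖ ^ s)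
      = fun h : E => (Ioi c).indicator (fun r : ℝ => r ^ s) ‖h‖ := by
    funext h
    by_cases hh : c < ‖h‖ <;> simp [indicator, hh]
  rw [hrw]
  refine radial_integrable μ (Measurable.indicator (by fun_prop) measurableSet_Ioi) ?_
  have hrw2 : (fun r : ℝ => r ^ (finrank ℝ E - 1) * (Ioi c).indicator (fun t : ℝ => t ^ s) r)
      = (Ioi c).indicator (fun r : ℝ => r ^ (finrank ℝ E - 1) * r ^ s) := by
    funext r
    by_cases hr : c < r <;> simp [indicator, hr]
  rw [hrw2, IntegrableOn, integrable_indicator_iff measurableSet_Ioi, IntegrableOn,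
    Measure.restrict_restrict measurableSet_Ioi, Ioi_inter_Ioi, max_eq_left hc.le]
  have hint : IntegrableOn (fun r : ℝ => r ^ ((finrank ℝ E : ℝ) - 1 + s)) (Ioi c) volume :=
    integrableOn_Ioi_rpow_of_lt (by linarith) hc
  have hcast : ((finrank ℝ E - 1 : ℕ) : ℝ) = (finrank ℝ E : ℝ) - 1 := by
    push_cast [Nat.cast_sub hn1]
    ring
  refine hint.congr_fun (fun r hr => ?_) measurableSet_Ioi
  have hr0 : (0:ℝ) < r := lt_trans hc hr
  dsimp only
  rw [Real.rpow_add hr0, ← Real.rpow_natCast r (finrank ℝ E - 1), hcast]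

end Radial
section SecondDiff

variable {E : Type*} [NormedAddCommGroup E] [NormedSpace ℝ E]

lemma second_diff_bound {g : E → ℝ} (hg : ContDiff ℝ 2 g) {M : ℝ} (hM0 : 0 ≤ M)
    (hg2 : ∀ z, ‖iteratedFDeriv ℝ 2 g z‖ ≤ M) (x h : E) :
    |g (x + h) + g (x - h) - 2 * g x| ≤ 2 * M * ‖h‖ ^ 2 := by
  have hdg : Differentiable ℝ g := hg.differentiable (by norm_num)
  have hdg' : Differentiable ℝ (fderiv ℝ g) :=
    (hg.fderiv_right (m := 1) (by norm_num)).differentiable (by norm_num)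
  have hlip : LipschitzWith (Real.toNNReal M) (fderiv ℝ g) := by
    apply lipschitzWith_of_nnnorm_fderiv_le hdg'
    intro z
    rw [← NNReal.coe_le_coe, coe_nnnorm, Real.coe_toNNReal _ hM0]
    calc ‖fderiv ℝ (fderiv ℝ g) z‖
        = ‖iteratedFDeriv ℝ 0 (fderiv ℝ (fderiv ℝ g)) z‖ := by
          rw [norm_iteratedFDeriv_zero]
      _ = ‖iteratedFDeriv ℝ 1 (fderiv ℝ g) z‖ := norm_iteratedFDeriv_fderiv
      _ = ‖iteratedFDeriv ℝ 2 g z‖ := norm_iteratedFDeriv_fderiv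
      _ ≤ M := hg2 z
  set ψ : ℝ → ℝ := fun t => g (x + t • h) + g (x - t • h) with hψdef
  set ψ' : ℝ → ℝ := fun t => fderiv ℝ g (x + t • h) h - fderiv ℝ g (x - t • h) h with hψ'def
  have hasd : ∀ t : ℝ, HasDerivAt ψ (ψ' t) t := by
    intro t
    have d1 : HasDerivAt (fun t : ℝ => x + t • h) h t := by
      simpa using ((hasDerivAt_id t).smul_const h).const_add x
    have d2 : HasDerivAt (fun t : ℝ => x - t • h) (-h) t := by
      simpa using ((hasDerivAt_id t).smul_const h).const_sub x
    have e1 : HasDerivAt (fun t : ℝ => g (x + t • h)) (fderiv ℝ g (x + t • h) h) t :=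
      (hdg (x + t • h)).hasFDerivAt.comp_hasDerivAt t d1
    have e2 : HasDerivAt (fun t : ℝ => g (x - t • h)) (fderiv ℝ g (x - t • h) (-h)) t :=
      (hdg (x - t • h)).hasFDerivAt.comp_hasDerivAt t d2
    have := e1.add e2
    rw [map_neg] at this
    simpa [hψdef, hψ'def, sub_eq_add_neg, Pi.add_def] using this
  have hbound : ∀ t ∈ Icc (0:ℝ) 1, ‖ψ' t‖ ≤ 2 * M * ‖h‖ ^ 2 := by
    rintro t ⟨ht0, ht1⟩
    have key : ‖fderiv ℝ g (x + t • h) - fderiv ℝ g (x - t • h)‖ ≤ M * (2 * t * ‖h‖) := by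
      have := hlip.dist_le_mul (x + t • h) (x - t • h)
      rw [dist_eq_norm, dist_eq_norm, Real.coe_toNNReal _ hM0] at this
      have hxy : x + t • h - (x - t • h) = (2 * t) • h := by
        rw [two_mul, add_smul]; abel
      rw [hxy, norm_smul] at this
      simpa [abs_of_nonneg ht0, mul_assoc] using this
    calc ‖ψ' t‖ = ‖(fderiv ℝ g (x + t • h) - fderiv ℝ g (x - t • h)) h‖ := by
          simp [hψ'def, ContinuousLinearMap.sub_apply]
      _ ≤ ‖fderiv ℝ g (x + t • h) - fderiv ℝ g (x - t • h)‖ * ‖h‖ :=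
          ContinuousLinearMap.le_opNorm _ h
      _ ≤ M * (2 * t * ‖h‖) * ‖h‖ := by
          apply mul_le_mul_of_nonneg_right key (norm_nonneg h)
      _ ≤ 2 * M * ‖h‖ ^ 2 := by
          nlinarith [mul_nonneg (mul_nonneg hM0 (sub_nonneg.2 ht1)) (sq_nonneg ‖h‖),
            sq_nonneg ‖h‖, norm_nonneg h]
  have hmain := Convex.norm_image_sub_le_of_norm_hasDerivWithin_le
    (f := ψ) (f' := ψ') (s := Icc (0:ℝ) 1) (C := 2 * M * ‖h‖ ^ 2)
    (fun t ht => (hasd t).hasDerivWithinAt) hbound (convex_Icc 0 1)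
    (left_mem_Icc.2 zero_le_one) (right_mem_Icc.2 zero_le_one)
  have hψ1 : ψ 1 = g (x + h) + g (x - h) := by simp [hψdef]
  have hψ0 : ψ 0 = 2 * g x := by simp [hψdef]; ring
  rw [hψ1, hψ0] at hmain
  simpa [Real.norm_eq_abs] using hmain

end SecondDiff

section Kernel

lemma kernel_bound {p r y : ℝ} (hp : 0 < p) (hr : 0 < r) (hy : 0 < y) :
    0 ≤ r ^ (-p) - (r ^ 2 + y ^ 2) ^ (-p / 2) ∧
      r ^ (-p) - (r ^ 2 + y ^ 2) ^ (-p / 2) ≤ r ^ (-p) ∧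
      r ^ (-p) - (r ^ 2 + y ^ 2) ^ (-p / 2) ≤ p / 2 * y ^ 2 * r ^ (-p - 2) := by
  have ha : (0:ℝ) < r ^ 2 := by positivity
  have hb : (0:ℝ) < y ^ 2 := by positivity
  have hq : (0:ℝ) < p / 2 := by positivity
  -- rewrite `r ^ (-p)` and `r ^ (-p-2)` as rpowers of `r ^ 2`
  have e1 : (r ^ 2 : ℝ) ^ (-p / 2) = r ^ (-p) := by
    rw [← Real.rpow_natCast r 2, ← Real.rpow_mul hr.le]
    congr 1
    ring
  have e2 : (r ^ 2 : ℝ) ^ (-p / 2 - 1) = r ^ (-p - 2) := by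
    rw [← Real.rpow_natCast r 2, ← Real.rpow_mul hr.le]
    congr 1
    ring
  have mono : (r ^ 2 + y ^ 2 : ℝ) ^ (-p / 2) ≤ (r ^ 2 : ℝ) ^ (-p / 2) :=
    Real.rpow_le_rpow_of_nonpos ha (by linarith) (by linarith)
  have h0 : 0 ≤ r ^ (-p) - (r ^ 2 + y ^ 2) ^ (-p / 2) := by
    rw [← e1]; linarith
  refine ⟨h0, sub_le_self _ (Real.rpow_nonneg (by positivity) _), ?_⟩
  -- mean value theorem on `t ↦ t ^ (-p/2)`
  obtain ⟨c, hc, hceq⟩ := exists_hasDerivAt_eq_slope (fun t : ℝ => t ^ (-p / 2))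
    (fun t : ℝ => -p / 2 * t ^ (-p / 2 - 1)) (by linarith : r ^ 2 < r ^ 2 + y ^ 2)
    (fun t ht => by
      have ht0 : (0:ℝ) < t := lt_of_lt_of_le ha ht.1
      exact (Real.continuousAt_rpow_const t (-p / 2) (Or.inl ht0.ne')).continuousWithinAt)
    (fun t ht => Real.hasDerivAt_rpow_const (Or.inl (ne_of_gt (lt_trans ha ht.1))))
  have hc0 : (0:ℝ) < c := lt_trans ha hc.1
  have hd : r ^ 2 + y ^ 2 - (r ^ 2) = y ^ 2 := by ring
  rw [hd, eq_div_iff hb.ne'] at hceq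
  have hkey : r ^ (-p) - (r ^ 2 + y ^ 2) ^ (-p / 2) = p / 2 * y ^ 2 * c ^ (-p / 2 - 1) := by
    rw [← e1]; linarith [hceq]
  rw [hkey]
  have hcle : c ^ (-p / 2 - 1) ≤ r ^ (-p - 2) := by
    rw [← e2]
    exact Real.rpow_le_rpow_of_nonpos ha hc.1.le (by linarith)
  exact mul_le_mul_of_nonneg_left hcle (by positivity)

end Kernel
set_option maxHeartbeats 2000000 in
theorem stmt0 (N : ℕ) (hN : 1 ≤ N) (σ : ℝ) (hσ : σ ∈ Set.Ioo (0:ℝ) 2)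
    (g : EuclideanSpace ℝ (Fin N) → ℝ) (hg : ContDiff ℝ 2 g) (M : ℝ)
    (hg0 : ∀ x, |g x| ≤ M)
    (hg1 : ∀ x, ‖fderiv ℝ g x‖ ≤ M)
    (hg2 : ∀ x, ‖iteratedFDeriv ℝ 2 g x‖ ≤ M) :
    ∃ C > 0, ∀ (x : EuclideanSpace ℝ (Fin N)), ∀ y ∈ Set.Ioc (0:ℝ) 1,
      ∃ L : ℝ,
        Tendsto
          (fun ε : ℝ =>
            ∫ ξ in {ξ : EuclideanSpace ℝ (Fin N) | ε < dist ξ x},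
              (g ξ - g x) *
                ((dist x ξ ^ 2 + y ^ 2) ^ (-((N : ℝ) + σ) / 2)
                  - dist x ξ ^ (-((N : ℝ) + σ))))
          (nhdsWithin 0 (Set.Ioi 0)) (nhds L)
        ∧ |L| ≤ C * y ^ (2 - σ) := by
  obtain ⟨hσ0, hσ2⟩ := hσ
  haveI : Nonempty (Fin N) := Fin.pos_iff_nonempty.mp hN
  haveI hnt : Nontrivial (EuclideanSpace ℝ (Fin N)) := inferInstance
  set p : ℝ := (N : ℝ) + σ with hp
  have hN1 : (1:ℝ) ≤ (N:ℝ) := by exact_mod_cast hN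
  have hp0 : 0 < p := by rw [hp]; linarith
  have hn : finrank ℝ (EuclideanSpace ℝ (Fin N)) = N := finrank_euclideanSpace_fin
  have hM0 : 0 ≤ M := le_trans (abs_nonneg _) (hg0 0)
  set c₀ : ℝ := (N : ℝ) * (volume (ball (0 : (EuclideanSpace ℝ (Fin N))) 1)).toReal with hc₀
  have hc₀0 : 0 ≤ c₀ := by
    rw [hc₀]; positivity
  have hfacnn : 0 ≤ 2 * M / (2 - σ) + M * p / σ := by
    have h1 : 0 ≤ 2 * M / (2 - σ) := div_nonneg (by linarith) (by linarith)
    have h2 : 0 ≤ M * p / σ := div_nonneg (by positivity) hσ0.le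
    linarith
  refine ⟨c₀ * (2 * M / (2 - σ) + M * p / σ) / 2 + 1, by nlinarith, fun x y hy => ?_⟩
  obtain ⟨hy0, hy1⟩ := hy
  have hgm : Measurable g := hg.continuous.measurable
  -- the symmetrized integrand
  set G : (EuclideanSpace ℝ (Fin N)) → ℝ := fun h =>
    (g (x + h) + g (x + -h) - 2 * g x) * ((‖h‖ ^ 2 + y ^ 2) ^ (-p / 2) - ‖h‖ ^ (-p)) with hG
  -- the radial dominating profile
  set φ : ℝ → ℝ := fun r => 2 * M * min (r ^ (2 - p)) (p / 2 * y ^ 2 * r ^ (-p)) with hφ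
  have hGmeas : Measurable G := by
    rw [hG]; fun_prop
  have hφmeas : Measurable φ := by
    rw [hφ]; fun_prop
  have hφnn : ∀ r : ℝ, 0 ≤ r → 0 ≤ φ r := by
    intro r hr
    rw [hφ]
    exact mul_nonneg (by linarith)
      (le_min (Real.rpow_nonneg hr _) (mul_nonneg (by positivity) (Real.rpow_nonneg hr _)))
  -- kernel bounds
  have hkabs : ∀ r : ℝ, 0 < r →
      |(r ^ 2 + y ^ 2) ^ (-p / 2) - r ^ (-p)| ≤ min (r ^ (-p)) (p / 2 * y ^ 2 * r ^ (-p - 2)) := by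
    intro r hr
    have h3 := kernel_bound hp0 hr hy0
    rw [abs_sub_comm, abs_of_nonneg h3.1]
    exact le_min h3.2.1 h3.2.2
  -- pointwise domination
  have hGb : ∀ h : (EuclideanSpace ℝ (Fin N)), |G h| ≤ φ ‖h‖ := by
    intro h
    by_cases hh : h = (0 : (EuclideanSpace ℝ (Fin N)))
    · subst hh
      have hG0 : G 0 = 0 := by
        rw [hG]
        simp only [add_zero, neg_zero]
        ring
      have hφ0 : φ ‖(0 : (EuclideanSpace ℝ (Fin N)))‖ = 0 := by
        rw [hφ]
        dsimp only
        rw [norm_zero, Real.zero_rpow (neg_ne_zero.mpr hp0.ne'), mul_zero,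
          min_eq_right (Real.rpow_nonneg le_rfl _), mul_zero]
      rw [hG0, hφ0]
      simp
    · have hr : 0 < ‖h‖ := norm_pos_iff.mpr hh
      have hsd : |g (x + h) + g (x + -h) - 2 * g x| ≤ 2 * M * ‖h‖ ^ 2 := by
        have := second_diff_bound hg hM0 hg2 x h
        rwa [sub_eq_add_neg x h] at this
      have h1 : |G h| ≤ 2 * M * ‖h‖ ^ 2 * |(‖h‖ ^ 2 + y ^ 2) ^ (-p / 2) - ‖h‖ ^ (-p)| := by
        rw [hG]
        dsimp only
        rw [abs_mul]
        exact mul_le_mul_of_nonneg_right hsd (abs_nonneg _)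
      refine h1.trans ?_
      have hmul : 2 * M * ‖h‖ ^ 2 * |(‖h‖ ^ 2 + y ^ 2) ^ (-p / 2) - ‖h‖ ^ (-p)|
          ≤ 2 * M * ‖h‖ ^ 2 * min (‖h‖ ^ (-p)) (p / 2 * y ^ 2 * ‖h‖ ^ (-p - 2)) :=
        mul_le_mul_of_nonneg_left (hkabs ‖h‖ hr) (by positivity)
      refine hmul.trans ?_
      rw [hφ]
      dsimp only
      have e1 : ‖h‖ ^ (2:ℕ) * ‖h‖ ^ (-p) = ‖h‖ ^ (2 - p) := by
        rw [← Real.rpow_natCast ‖h‖ 2, ← Real.rpow_add hr]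
        congr 1 <;> push_cast <;> ring
      have e2 : ‖h‖ ^ (2:ℕ) * ‖h‖ ^ (-p - 2) = ‖h‖ ^ (-p) := by
        rw [← Real.rpow_natCast ‖h‖ 2, ← Real.rpow_add hr]
        congr 1 <;> push_cast <;> ring
      rw [mul_min_of_nonneg _ _ (by positivity : (0:ℝ) ≤ 2 * M * ‖h‖ ^ 2),
        mul_min_of_nonneg _ _ (by linarith : (0:ℝ) ≤ 2 * M)]
      apply min_le_min
      · refine le_of_eq ?_
        calc 2 * M * ‖h‖ ^ 2 * ‖h‖ ^ (-p) = 2 * M * (‖h‖ ^ (2:ℕ) * ‖h‖ ^ (-p)) := by ring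
          _ = 2 * M * ‖h‖ ^ (2 - p) := by rw [e1]
      · refine le_of_eq ?_
        calc 2 * M * ‖h‖ ^ 2 * (p / 2 * y ^ 2 * ‖h‖ ^ (-p - 2))
            = 2 * M * (p / 2 * y ^ 2 * (‖h‖ ^ (2:ℕ) * ‖h‖ ^ (-p - 2))) := by ring
          _ = 2 * M * (p / 2 * y ^ 2 * ‖h‖ ^ (-p)) := by rw [e2]
  -- cast and power helpers
  have hNc : ((N - 1 : ℕ) : ℝ) = (N : ℝ) - 1 := by
    push_cast [Nat.cast_sub hN]
    ring
  have hpow : ∀ r : ℝ, 0 < r → ∀ s : ℝ, r ^ (N - 1 : ℕ) * r ^ s = r ^ ((N : ℝ) - 1 + s) := by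
    intro r hr s
    rw [← Real.rpow_natCast r (N - 1), hNc, ← Real.rpow_add hr]
  -- 1D integrable dominating pieces
  have hbd1 : IntegrableOn (fun r : ℝ => 2 * M * r ^ (1 - σ)) (Ioc 0 y) volume :=
    Integrable.const_mul ((intervalIntegrable_iff_integrableOn_Ioc_of_le hy0.le).1
      (intervalIntegral.intervalIntegrable_rpow' (by linarith))) _
  have hbd2 : IntegrableOn (fun r : ℝ => M * p * y ^ 2 * r ^ (-1 - σ)) (Ioi y) volume :=
    Integrable.const_mul (integrableOn_Ioi_rpow_of_lt (by linarith) hy0) _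
  have hptw1 : ∀ r ∈ Ioc (0:ℝ) y, r ^ (N - 1 : ℕ) * φ r ≤ 2 * M * r ^ (1 - σ) := by
    rintro r ⟨hr0, _⟩
    have hle : φ r ≤ 2 * M * r ^ (2 - p) := by
      rw [hφ]
      exact mul_le_mul_of_nonneg_left (min_le_left _ _) (by linarith)
    calc r ^ (N - 1 : ℕ) * φ r ≤ r ^ (N - 1 : ℕ) * (2 * M * r ^ (2 - p)) :=
          mul_le_mul_of_nonneg_left hle (by positivity)
      _ = 2 * M * (r ^ (N - 1 : ℕ) * r ^ (2 - p)) := by ring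
      _ = 2 * M * r ^ (1 - σ) := by
          rw [hpow r hr0]
          congr 2
          rw [hp]; ring
  have hptw2 : ∀ r ∈ Ioi y, r ^ (N - 1 : ℕ) * φ r ≤ M * p * y ^ 2 * r ^ (-1 - σ) := by
    intro r hr
    have hr0 : (0:ℝ) < r := lt_trans hy0 hr
    have hle : φ r ≤ 2 * M * (p / 2 * y ^ 2 * r ^ (-p)) := by
      rw [hφ]
      exact mul_le_mul_of_nonneg_left (min_le_right _ _) (by linarith)
    calc r ^ (N - 1 : ℕ) * φ r ≤ r ^ (N - 1 : ℕ) * (2 * M * (p / 2 * y ^ 2 * r ^ (-p))) :=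
          mul_le_mul_of_nonneg_left hle (by positivity)
      _ = M * p * y ^ 2 * (r ^ (N - 1 : ℕ) * r ^ (-p)) := by ring
      _ = M * p * y ^ 2 * r ^ (-1 - σ) := by
          rw [hpow r hr0]
          congr 2
          rw [hp]; ring
  have hmeas1d : Measurable fun r : ℝ => r ^ (N - 1 : ℕ) * φ r :=
    (measurable_id.pow_const _).mul hφmeas
  have hφnonneg_on : ∀ r : ℝ, 0 < r → 0 ≤ r ^ (N - 1 : ℕ) * φ r := fun r hr =>
    mul_nonneg (by positivity) (hφnn r hr.le)
  have hint1 : IntegrableOn (fun r : ℝ => r ^ (N - 1 : ℕ) * φ r) (Ioc 0 y) volume := by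
    refine hbd1.mono' hmeas1d.aestronglyMeasurable ?_
    rw [ae_restrict_iff' measurableSet_Ioc]
    refine Eventually.of_forall fun r hr => ?_
    rw [Real.norm_eq_abs, abs_of_nonneg (hφnonneg_on r hr.1)]
    exact hptw1 r hr
  have hint2 : IntegrableOn (fun r : ℝ => r ^ (N - 1 : ℕ) * φ r) (Ioi y) volume := by
    refine hbd2.mono' hmeas1d.aestronglyMeasurable ?_
    rw [ae_restrict_iff' measurableSet_Ioi]
    refine Eventually.of_forall fun r hr => ?_
    rw [Real.norm_eq_abs, abs_of_nonneg (hφnonneg_on r (lt_trans hy0 hr))]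
    exact hptw2 r hr
  have hint1d : IntegrableOn (fun r : ℝ => r ^ (N - 1 : ℕ) * φ r) (Ioi 0) volume := by
    rw [← Ioc_union_Ioi_eq_Ioi hy0.le]
    exact hint1.union hint2
  have hBdint : Integrable (fun h : (EuclideanSpace ℝ (Fin N)) => φ ‖h‖) volume := by
    refine radial_integrable volume hφmeas ?_
    simpa only [hn] using hint1d
  have hGint : Integrable G volume :=
    hBdint.mono' hGmeas.aestronglyMeasurable
      (Eventually.of_forall fun h => by rw [Real.norm_eq_abs]; exact hGb h)
  -- exact values for the dominating 1D integrals
  have hval1 : ∫ r in Ioc (0:ℝ) y, 2 * M * r ^ (1 - σ) = 2 * M * (y ^ (2 - σ) / (2 - σ)) := by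
    rw [MeasureTheory.integral_const_mul]
    congr 1
    rw [← intervalIntegral.integral_of_le hy0.le, integral_rpow (Or.inl (by linarith))]
    have e : (1:ℝ) - σ + 1 = 2 - σ := by ring
    rw [e, Real.zero_rpow (ne_of_gt (by linarith)), sub_zero]
  have hval2 : ∫ r in Ioi y, M * p * y ^ 2 * r ^ (-1 - σ) = M * p * y ^ 2 * (y ^ (-σ) / σ) := by
    rw [MeasureTheory.integral_const_mul]
    congr 1
    rw [integral_Ioi_rpow_of_lt (by linarith) hy0]
    have e : (-1:ℝ) - σ + 1 = -σ := by ring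
    rw [e, neg_div_neg_eq]
  have h1d : ∫ r in Ioi (0:ℝ), r ^ (N - 1 : ℕ) * φ r
      ≤ (2 * M / (2 - σ) + M * p / σ) * y ^ (2 - σ) := by
    rw [← Ioc_union_Ioi_eq_Ioi hy0.le,
      setIntegral_union (Ioc_disjoint_Ioi le_rfl) measurableSet_Ioi hint1 hint2]
    have b1 : ∫ r in Ioc (0:ℝ) y, r ^ (N - 1 : ℕ) * φ r ≤ 2 * M * (y ^ (2 - σ) / (2 - σ)) := by
      rw [← hval1]
      exact setIntegral_mono_on hint1 hbd1 measurableSet_Ioc hptw1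
    have b2 : ∫ r in Ioi y, r ^ (N - 1 : ℕ) * φ r ≤ M * p * y ^ 2 * (y ^ (-σ) / σ) := by
      rw [← hval2]
      exact setIntegral_mono_on hint2 hbd2 measurableSet_Ioi hptw2
    have hyy : y ^ (2:ℕ) * y ^ (-σ) = y ^ (2 - σ) := by
      rw [← Real.rpow_natCast y 2, ← Real.rpow_add hy0]
      congr 1 <;> push_cast <;> ring
    have e2' : M * p * y ^ 2 * (y ^ (-σ) / σ) = M * p / σ * y ^ (2 - σ) := by
      rw [← hyy]
      field_simp
      try ring
    have e1' : 2 * M * (y ^ (2 - σ) / (2 - σ)) = 2 * M / (2 - σ) * y ^ (2 - σ) := by ring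
    rw [e2'] at b2
    rw [e1'] at b1
    linarith
  have hBdval : (∫ h : (EuclideanSpace ℝ (Fin N)), φ ‖h‖) ≤ c₀ * ((2 * M / (2 - σ) + M * p / σ) * y ^ (2 - σ)) := by
    rw [integral_fun_norm_addHaar (volume : Measure (EuclideanSpace ℝ (Fin N))) φ]
    simp only [hn, nsmul_eq_mul, smul_eq_mul]
    calc (N:ℝ) * ((volume (ball (0:(EuclideanSpace ℝ (Fin N))) 1)).toReal * ∫ r in Ioi (0:ℝ), r ^ (N - 1 : ℕ) * φ r)
        ≤ (N:ℝ) * ((volume (ball (0:(EuclideanSpace ℝ (Fin N))) 1)).toReal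
            * ((2 * M / (2 - σ) + M * p / σ) * y ^ (2 - σ))) :=
          mul_le_mul_of_nonneg_left
            (mul_le_mul_of_nonneg_left h1d ENNReal.toReal_nonneg) (Nat.cast_nonneg N)
      _ = c₀ * ((2 * M / (2 - σ) + M * p / σ) * y ^ (2 - σ)) := by rw [hc₀]; ring
  refine ⟨(∫ h : (EuclideanSpace ℝ (Fin N)), G h) / 2, ?_, ?_⟩
  · -- the principal value converges
    have h0ae : ∀ᵐ h : (EuclideanSpace ℝ (Fin N)) ∂volume, h ≠ (0 : (EuclideanSpace ℝ (Fin N))) := by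
      rw [ae_iff]
      simp only [not_not, setOf_eq_eq_singleton]
      exact measure_singleton 0
    have key : Tendsto (fun ε : ℝ => ∫ h : (EuclideanSpace ℝ (Fin N)), ({h' : (EuclideanSpace ℝ (Fin N)) | ε < ‖h'‖}.indicator G) h)
        (nhdsWithin 0 (Ioi 0)) (nhds (∫ h : (EuclideanSpace ℝ (Fin N)), G h)) := by
      refine tendsto_integral_filter_of_dominated_convergence (fun h => φ ‖h‖)
        (Eventually.of_forall fun ε =>
          (hGmeas.indicator (measurableSet_lt measurable_const measurable_norm)).aestronglyMeasurable)
        (Eventually.of_forall fun ε => Eventually.of_forall fun h =>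
          le_trans (norm_indicator_le_norm_self G h) (by rw [Real.norm_eq_abs]; exact hGb h))
        hBdint ?_
      filter_upwards [h0ae] with h hh
      have hpos : 0 < ‖h‖ := norm_pos_iff.mpr hh
      refine tendsto_const_nhds.congr' ?_
      filter_upwards [(eventually_lt_nhds hpos).filter_mono nhdsWithin_le_nhds] with ε hε
      exact (indicator_of_mem (show h ∈ {h' : (EuclideanSpace ℝ (Fin N)) | ε < ‖h'‖} from hε) G).symm
    refine Filter.Tendsto.congr' ?_ (key.div_const 2)
    filter_upwards [self_mem_nhdsWithin] with ε hε
    rw [mem_Ioi] at hε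
    have hmA : MeasurableSet {h' : (EuclideanSpace ℝ (Fin N)) | ε < ‖h'‖} :=
      measurableSet_lt measurable_const measurable_norm
    set F : (EuclideanSpace ℝ (Fin N)) → ℝ := fun ξ =>
      (g ξ - g x) * ((dist x ξ ^ 2 + y ^ 2) ^ (-p / 2) - dist x ξ ^ (-p)) with hF
    have hFmeas : Measurable F := by
      rw [hF]; fun_prop
    have t1 : ∫ ξ in {ξ : (EuclideanSpace ℝ (Fin N)) | ε < dist ξ x}, F ξ = ∫ h in {h' : (EuclideanSpace ℝ (Fin N)) | ε < ‖h'‖}, F (x + h) := by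
      have e := (measurePreserving_add_left (volume : Measure (EuclideanSpace ℝ (Fin N))) x).setIntegral_preimage_emb
        ((Homeomorph.addLeft x).measurableEmbedding) F {ξ : (EuclideanSpace ℝ (Fin N)) | ε < dist ξ x}
      have hpre : (fun h : (EuclideanSpace ℝ (Fin N)) => x + h) ⁻¹' {ξ : (EuclideanSpace ℝ (Fin N)) | ε < dist ξ x} = {h' : (EuclideanSpace ℝ (Fin N)) | ε < ‖h'‖} := by
        ext h
        simp [dist_eq_norm, add_sub_cancel_left]
      rw [hpre] at e
      exact e.symm
    have t2 : ∫ ξ in {ξ : (EuclideanSpace ℝ (Fin N)) | ε < dist ξ x}, F ξ = ∫ h in {h' : (EuclideanSpace ℝ (Fin N)) | ε < ‖h'‖}, F (x + -h) := by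
      have mp2 : MeasurePreserving (fun h : (EuclideanSpace ℝ (Fin N)) => x + -h) volume volume :=
        (measurePreserving_add_left volume x).comp (Measure.measurePreserving_neg volume)
      have emb2 : MeasurableEmbedding (fun h : (EuclideanSpace ℝ (Fin N)) => x + -h) :=
        ((Homeomorph.neg (EuclideanSpace ℝ (Fin N))).trans (Homeomorph.addLeft x)).measurableEmbedding
      have e := mp2.setIntegral_preimage_emb emb2 F {ξ : (EuclideanSpace ℝ (Fin N)) | ε < dist ξ x}
      have hpre : (fun h : (EuclideanSpace ℝ (Fin N)) => x + -h) ⁻¹' {ξ : (EuclideanSpace ℝ (Fin N)) | ε < dist ξ x} = {h' : (EuclideanSpace ℝ (Fin N)) | ε < ‖h'‖} := by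
        ext h
        simp [dist_eq_norm, add_sub_cancel_left]
      rw [hpre] at e
      exact e.symm
    have hineg : -p < -((finrank ℝ (EuclideanSpace ℝ (Fin N)) : ℕ) : ℝ) := by
      rw [hn, hp]; push_cast; linarith
    have hbase2 : IntegrableOn (fun h : (EuclideanSpace ℝ (Fin N)) => 2 * M * ‖h‖ ^ (-p)) {h' : (EuclideanSpace ℝ (Fin N)) | ε < ‖h'‖} volume :=
      Integrable.const_mul (integrableOn_norm_rpow_gt volume hineg hε) _
    have habs2M : ∀ a : (EuclideanSpace ℝ (Fin N)), |g a - g x| ≤ 2 * M := by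
      intro a
      rw [sub_eq_add_neg]
      refine (abs_add_le _ _).trans ?_
      rw [abs_neg]
      have := hg0 a; have := hg0 x
      linarith
    have hker : ∀ h : (EuclideanSpace ℝ (Fin N)), ε < ‖h‖ →
        |(‖h‖ ^ 2 + y ^ 2) ^ (-p / 2) - ‖h‖ ^ (-p)| ≤ ‖h‖ ^ (-p) := fun h hh =>
      le_trans (hkabs ‖h‖ (lt_trans hε hh)) (min_le_left _ _)
    have hd1 : ∀ h : (EuclideanSpace ℝ (Fin N)), dist x (x + h) = ‖h‖ := by
      intro h
      simp [dist_eq_norm]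
    have hd2 : ∀ h : (EuclideanSpace ℝ (Fin N)), dist x (x + -h) = ‖h‖ := by
      intro h
      simp [dist_eq_norm]
    have int1 : IntegrableOn (fun h : (EuclideanSpace ℝ (Fin N)) => F (x + h)) {h' : (EuclideanSpace ℝ (Fin N)) | ε < ‖h'‖} volume := by
      refine hbase2.mono' (hFmeas.comp (measurable_const.add measurable_id)).aestronglyMeasurable ?_
      rw [ae_restrict_iff' hmA]
      refine Eventually.of_forall fun h hh => ?_
      rw [hF]
      dsimp only
      rw [hd1 h, Real.norm_eq_abs, abs_mul]
      exact mul_le_mul (habs2M _) (hker h hh) (abs_nonneg _) (by linarith)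
    have int2 : IntegrableOn (fun h : (EuclideanSpace ℝ (Fin N)) => F (x + -h)) {h' : (EuclideanSpace ℝ (Fin N)) | ε < ‖h'‖} volume := by
      refine hbase2.mono'
        ((hFmeas.comp (measurable_const.add measurable_id.neg))).aestronglyMeasurable ?_
      rw [ae_restrict_iff' hmA]
      refine Eventually.of_forall fun h hh => ?_
      rw [hF]
      dsimp only
      rw [hd2 h, Real.norm_eq_abs, abs_mul]
      exact mul_le_mul (habs2M _) (hker h hh) (abs_nonneg _) (by linarith)
    have hsum : ∀ h : (EuclideanSpace ℝ (Fin N)), F (x + h) + F (x + -h) = G h := by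
      intro h
      rw [hF, hG]
      dsimp only
      rw [hd1 h, hd2 h]
      ring
    have hGsum : ∫ h in {h' : (EuclideanSpace ℝ (Fin N)) | ε < ‖h'‖}, G h
        = (∫ h in {h' : (EuclideanSpace ℝ (Fin N)) | ε < ‖h'‖}, F (x + h)) + ∫ h in {h' : (EuclideanSpace ℝ (Fin N)) | ε < ‖h'‖}, F (x + -h) := by
      rw [← integral_add int1 int2]
      exact integral_congr_ae (Eventually.of_forall fun h => (hsum h).symm)
    calc (∫ h : (EuclideanSpace ℝ (Fin N)), ({h' : (EuclideanSpace ℝ (Fin N)) | ε < ‖h'‖}.indicator G) h) / 2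
        = (∫ h in {h' : (EuclideanSpace ℝ (Fin N)) | ε < ‖h'‖}, G h) / 2 := by rw [integral_indicator hmA]
      _ = ((∫ h in {h' : (EuclideanSpace ℝ (Fin N)) | ε < ‖h'‖}, F (x + h))
            + ∫ h in {h' : (EuclideanSpace ℝ (Fin N)) | ε < ‖h'‖}, F (x + -h)) / 2 := by rw [hGsum]
      _ = ∫ ξ in {ξ : (EuclideanSpace ℝ (Fin N)) | ε < dist ξ x}, F ξ := by rw [← t1, ← t2]; ring
  · -- the bound
    have hnormint : |∫ h : (EuclideanSpace ℝ (Fin N)), G h| ≤ ∫ h : (EuclideanSpace ℝ (Fin N)), φ ‖h‖ := by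
      calc |∫ h : (EuclideanSpace ℝ (Fin N)), G h|
          = ‖∫ h : (EuclideanSpace ℝ (Fin N)), G h‖ := (Real.norm_eq_abs _).symm
        _ ≤ ∫ h : (EuclideanSpace ℝ (Fin N)), ‖G h‖ := norm_integral_le_integral_norm G
        _ ≤ ∫ h : (EuclideanSpace ℝ (Fin N)), φ ‖h‖ :=
            integral_mono hGint.norm hBdint fun h => by
              rw [Real.norm_eq_abs]; exact hGb h
    have hyσ : 0 < y ^ (2 - σ) := Real.rpow_pos_of_pos hy0 _
    have habsL : |(∫ h : (EuclideanSpace ℝ (Fin N)), G h) / 2| = |∫ h : (EuclideanSpace ℝ (Fin N)), G h| / 2 := by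
      rw [abs_div]
      norm_num
    rw [habsL]
    have h1 : |∫ h : (EuclideanSpace ℝ (Fin N)), G h| ≤ c₀ * ((2 * M / (2 - σ) + M * p / σ) * y ^ (2 - σ)) :=
      hnormint.trans hBdval
    nlinarith [h1, hyσ.le, mul_nonneg (mul_nonneg hc₀0 hfacnn) hyσ.le]
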